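/- For any matrix M : Matrix ι κ ℂ over finite index types, the real part of tr((M * Mᴴ)²) is at least ∑_{i : ι} ∑_{j : κ} ‖M i j‖⁴. (This is the α = 2 core of Proposition 4: the Rényi-2 entanglement entropy of a bipartite pure state whose coefficient matrix in an orthonormal product basis is M is at most its Rényi-2 participation entropy in that basis, since tr((M Mᴴ)²) is the purity of the reduced density matrix and the right-hand side is the sum of fourth powers of the coefficients.) -/
import Mathlib


open Matrix Kronecker
open scoped Classical

noncomputable section

/-- Single-qubit Pauli matrices. -/
def pauli : Fin 4 → Matrix (Fin 2) (Fin 2) ℂ :=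
  ![1, !![0, 1; 1, 0], !![0, -Complex.I; Complex.I, 0], !![1, 0; 0, -1]]

/-- Pauli string on `N` qubits with label `a`. -/
def PauliString {N : ℕ} (a : Fin N → Fin 4) :
    Matrix (Fin N → Fin 2) (Fin N → Fin 2) ℂ :=
  fun f g => ∏ k, pauli (a k) (f k) (g k)

/-- Reduced Choi state: partial trace over the doubled-B factor of the
normalized Choi state of `O`. -/
def rhoA {ιA ιB : Type*} [Fintype ιA] [Fintype ιB]
    (O : Matrix (ιA × ιB) (ιA × ιB) ℂ) :
    Matrix (ιA × ιA) (ιA × ιA) ℂ :=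
  fun p q =>
    (1 / (Fintype.card ιA * Fintype.card ιB : ℂ)) *
      ∑ b : ιB, ∑ b' : ιB, O (p.1, b) (p.2, b') * star (O (q.1, b) (q.2, b'))

/-- Identification of `N = N_A + N_B` qubits with the pair of subsystems. -/
def qubitEquiv (NA NB : ℕ) :
    (Fin (NA + NB) → Fin 2) ≃ (Fin NA → Fin 2) × (Fin NB → Fin 2) :=
  (Equiv.arrowCongr finSumFinEquiv.symm (Equiv.refl (Fin 2))).trans
    (Equiv.sumArrowEquivProdArrow _ _ _)

/-- Reduced Choi state of an `N = N_A + N_B` qubit operator, subsystem A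
being the first `N_A` qubits. -/
def rhoAq (NA NB : ℕ)
    (O : Matrix (Fin (NA + NB) → Fin 2) (Fin (NA + NB) → Fin 2) ℂ) :
    Matrix ((Fin NA → Fin 2) × (Fin NA → Fin 2))
      ((Fin NA → Fin 2) × (Fin NA → Fin 2)) ℂ :=
  rhoA (Matrix.reindex (qubitEquiv NA NB) (qubitEquiv NA NB) O)

/-- `n`-fold replica (tensor power) of a matrix. -/
def replica {ι : Type*} (n : ℕ) (O : Matrix ι ι ℂ) :
    Matrix (Fin n → ι) (Fin n → ι) ℂ :=
  fun f g => ∏ a, O (f a) (g a)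

/-- Replica permutation operator. -/
def Tperm {ι : Type*} [DecidableEq ι] {n : ℕ} (π : Equiv.Perm (Fin n)) :
    Matrix (Fin n → ι) (Fin n → ι) ℂ :=
  fun f g => if f = g ∘ π then 1 else 0

/-- Number of cycles of a permutation, counting fixed points as 1-cycles. -/
def numCycles {n : ℕ} (π : Equiv.Perm (Fin n)) : ℕ :=
  Multiset.card π.cycleType + (Finset.univ.filter fun x => π x = x).card

/-- `δ(π) = 0` if `π` has no fixed points and all cycles of even length,
else `δ(π) = 1`. -/
def deltaOdd {n : ℕ} (π : Equiv.Perm (Fin n)) : ℕ :=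
  if (∀ x, π x ≠ x) ∧ (∀ c ∈ π.cycleType, Even c) then 0 else 1

/-- Projector onto four-fold replicated Pauli strings. -/
def LambdaPlus (N : ℕ) :
    Matrix (Fin 4 → (Fin N → Fin 2)) (Fin 4 → (Fin N → Fin 2)) ℂ :=
  (1 / (4 ^ N : ℂ)) • ∑ a : Fin N → Fin 4, replica 4 (PauliString a)

def permA : Equiv.Perm (Fin 4) := Equiv.swap 0 1 * Equiv.swap 2 3
def permB : Equiv.Perm (Fin 4) := Equiv.swap 0 3 * Equiv.swap 1 2

/-- The purity contraction permutation operator `T'` on four replicas of a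
bipartite system. -/
def Tprime {ιA ιB : Type*} [DecidableEq ιA] [DecidableEq ιB] :
    Matrix (Fin 4 → ιA × ιB) (Fin 4 → ιA × ιB) ℂ :=
  fun f g =>
    if (∀ a, (f a).1 = (g (permA a)).1 ∧ (f a).2 = (g (permB a)).2) then 1 else 0

/-- The unitary stabilizer group of `U` (as a finite set of pairs of Pauli
labels). -/
def Stab {N : ℕ} (U : Matrix (Fin N → Fin 2) (Fin N → Fin 2) ℂ) :
    Finset ((Fin N → Fin 4) × (Fin N → Fin 4)) :=
  Finset.univ.filter fun p =>
    Matrix.trace (PauliString p.1 * Uᴴ * PauliString p.2 * U) / (2 ^ N : ℂ)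
      ∈ ({1, -1} : Set ℂ)


/-- the Rényi-2 purity `Re tr((M Mᴴ)²)` dominates the sum of
fourth powers of the coefficients of `M`. -/
theorem purity_ge_sum_pow_four {ι κ : Type*} [Fintype ι] [Fintype κ]
    (M : Matrix ι κ ℂ) :
    ∑ i : ι, ∑ j : κ, ‖M i j‖ ^ 4 ≤ (Matrix.trace ((M * Mᴴ) * (M * Mᴴ))).re := by
  set A := M * Mᴴ with hA
  have hherm : ∀ i i', A i' i = star (A i i') := by
    intro i i'
    have hE : Aᴴ = A := by
      rw [hA, Matrix.conjTranspose_mul, Matrix.conjTranspose_conjTranspose]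
    have h2 : star (A i' i) = A i i' := by rw [← Matrix.conjTranspose_apply, hE]
    rw [← h2, star_star]
  have htr : (Matrix.trace (A * A)).re = ∑ i : ι, ∑ i' : ι, ‖A i i'‖ ^ 2 := by
    have hts : Matrix.trace (A * A) = ∑ i : ι, ∑ i' : ι, A i i' * star (A i i') := by
      rw [Matrix.trace]
      congr 1
      ext i
      rw [Matrix.diag_apply, Matrix.mul_apply]
      congr 1
      ext i'
      rw [hherm i i']
    rw [hts, Complex.re_sum]
    congr 1
    ext i
    rw [Complex.re_sum]
    congr 1
    ext i'
    simp [Complex.star_def, Complex.mul_conj, Complex.normSq_eq_norm_sq,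
      ← Complex.ofReal_pow]
  rw [htr]
  apply Finset.sum_le_sum
  intro i _
  have hdiag : ∑ j : κ, ‖M i j‖ ^ 2 ≤ ‖A i i‖ := by
    have hAii : A i i = ((∑ j : κ, ‖M i j‖ ^ 2 : ℝ) : ℂ) := by
      rw [hA, Matrix.mul_apply, Complex.ofReal_sum]
      congr 1
      ext j
      rw [Matrix.conjTranspose_apply]
      simp [Complex.star_def, Complex.mul_conj, Complex.normSq_eq_norm_sq]
    rw [hAii, Complex.norm_real]
    exact le_abs_self _
  calc ∑ j : κ, ‖M i j‖ ^ 4 = ∑ j : κ, (‖M i j‖ ^ 2) ^ 2 := by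
        simp [← pow_mul]
  _ ≤ (∑ j : κ, ‖M i j‖ ^ 2) ^ 2 :=
        Finset.sum_sq_le_sq_sum_of_nonneg (fun j _ => sq_nonneg _)
  _ ≤ ‖A i i‖ ^ 2 :=
        pow_le_pow_left₀ (Finset.sum_nonneg fun j _ => sq_nonneg _) hdiag 2
  _ ≤ ∑ i' : ι, ‖A i i'‖ ^ 2 :=
        Finset.single_le_sum (f := fun i' => ‖A i i'‖ ^ 2)
          (fun i' _ => sq_nonneg _) (Finset.mem_univ i)

end
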